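/- Let J ⊆ ℝ be an interval, F : J → ℝ twice continuously differentiable, ω : J → ℝ continuous, and let x₁, x₂ : J → ℝ be twice differentiable nowhere-vanishing functions each solving the dissipative Milne–Pinney equation ẍ = −F'(t)ẋ + ω²(t)x + e^{−2F(t)}x^{−3} on J. Then the function t ↦ e^{2F(t)}(x₁(t)ẋ₂(t) − x₂(t)ẋ₁(t))² + (x₁(t)/x₂(t))² + (x₂(t)/x₁(t))² is constant on J. -/

import Mathlib

/-- Let `J ⊆ ℝ` be an interval, `F` twice continuously differentiable, `ω` continuous, and
let `x₁, x₂` (with derivatives `v₁, v₂`) be twice differentiable nowhere-vanishing solutions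
of the dissipative Milne–Pinney equation `ẍ = −F'(t)ẋ + ω²(t)x + e^{−2F(t)}x^{−3}` on `J`.
Then `t ↦ e^{2F(t)}(x₁ẋ₂ − x₂ẋ₁)² + (x₁/x₂)² + (x₂/x₁)²` is constant on `J`. -/
theorem mp_first_integral_constant (J : Set ℝ) (hJ : J.OrdConnected)
    (F : ℝ → ℝ) (hF : ContDiff ℝ 2 F) (ω : ℝ → ℝ) (hω : ContinuousOn ω J)
    (x₁ x₂ v₁ v₂ : ℝ → ℝ)
    (hx₁ : ∀ t ∈ J, x₁ t ≠ 0) (hx₂ : ∀ t ∈ J, x₂ t ≠ 0)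
    (hx₁' : ∀ t ∈ J, HasDerivWithinAt x₁ (v₁ t) J t)
    (hx₂' : ∀ t ∈ J, HasDerivWithinAt x₂ (v₂ t) J t)
    (hv₁' : ∀ t ∈ J, HasDerivWithinAt v₁
      (-(deriv F t) * v₁ t + (ω t) ^ 2 * x₁ t + Real.exp (-(2 * F t)) * ((x₁ t) ^ 3)⁻¹) J t)
    (hv₂' : ∀ t ∈ J, HasDerivWithinAt v₂
      (-(deriv F t) * v₂ t + (ω t) ^ 2 * x₂ t + Real.exp (-(2 * F t)) * ((x₂ t) ^ 3)⁻¹) J t) :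
    ∀ s ∈ J, ∀ t ∈ J,
      Real.exp (2 * F s) * (x₁ s * v₂ s - x₂ s * v₁ s) ^ 2
          + (x₁ s / x₂ s) ^ 2 + (x₂ s / x₁ s) ^ 2
        = Real.exp (2 * F t) * (x₁ t * v₂ t - x₂ t * v₁ t) ^ 2
          + (x₁ t / x₂ t) ^ 2 + (x₂ t / x₁ t) ^ 2 := by
  set G : ℝ → ℝ := fun t =>
    Real.exp (2 * F t) * (x₁ t * v₂ t - x₂ t * v₁ t) ^ 2
      + (x₁ t / x₂ t) ^ 2 + (x₂ t / x₁ t) ^ 2 with hG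
  have hFd : ∀ t : ℝ, HasDerivAt F (deriv F t) t := fun t =>
    ((hF.differentiable (by norm_num)) t).hasDerivAt
  have key : ∀ t ∈ J, HasDerivWithinAt G 0 J t := by
    intro t ht
    have h1 := hx₁' t ht
    have h2 := hx₂' t ht
    have h3 := hv₁' t ht
    have h4 := hv₂' t ht
    have hexp : HasDerivWithinAt (fun t => Real.exp (2 * F t))
        (Real.exp (2 * F t) * (2 * deriv F t)) J t :=
      (((hFd t).const_mul 2).exp).hasDerivWithinAt
    have hW : HasDerivWithinAt (fun t => x₁ t * v₂ t - x₂ t * v₁ t)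
        (v₁ t * v₂ t + x₁ t * (-(deriv F t) * v₂ t + (ω t) ^ 2 * x₂ t +
            Real.exp (-(2 * F t)) * ((x₂ t) ^ 3)⁻¹)
          - (v₂ t * v₁ t + x₂ t * (-(deriv F t) * v₁ t + (ω t) ^ 2 * x₁ t +
            Real.exp (-(2 * F t)) * ((x₁ t) ^ 3)⁻¹))) J t :=
      (h1.mul h4).sub (h2.mul h3)
    have hA : HasDerivWithinAt
        (fun t => Real.exp (2 * F t) * (x₁ t * v₂ t - x₂ t * v₁ t) ^ 2)
        (Real.exp (2 * F t) * (2 * deriv F t) * (x₁ t * v₂ t - x₂ t * v₁ t) ^ 2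
          + Real.exp (2 * F t) * ((↑2 : ℕ) * (x₁ t * v₂ t - x₂ t * v₁ t) ^ (2 - 1) *
            (v₁ t * v₂ t + x₁ t * (-(deriv F t) * v₂ t + (ω t) ^ 2 * x₂ t +
                Real.exp (-(2 * F t)) * ((x₂ t) ^ 3)⁻¹)
              - (v₂ t * v₁ t + x₂ t * (-(deriv F t) * v₁ t + (ω t) ^ 2 * x₁ t +
                Real.exp (-(2 * F t)) * ((x₁ t) ^ 3)⁻¹))))) J t :=
      hexp.mul (hW.pow 2)
    have hB : HasDerivWithinAt (fun t => (x₁ t / x₂ t) ^ 2)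
        ((↑2 : ℕ) * (x₁ t / x₂ t) ^ (2 - 1) *
          ((v₁ t * x₂ t - x₁ t * v₂ t) / (x₂ t) ^ 2)) J t :=
      (h1.div h2 (hx₂ t ht)).pow 2
    have hC : HasDerivWithinAt (fun t => (x₂ t / x₁ t) ^ 2)
        ((↑2 : ℕ) * (x₂ t / x₁ t) ^ (2 - 1) *
          ((v₂ t * x₁ t - x₂ t * v₁ t) / (x₁ t) ^ 2)) J t :=
      (h2.div h1 (hx₁ t ht)).pow 2
    have htotal := (hA.add hB).add hC
    refine htotal.congr_deriv (Eq.symm ?_)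
    have e1 : Real.exp (-(2 * F t)) = (Real.exp (2 * F t))⁻¹ := Real.exp_neg _
    have e2 : Real.exp (2 * F t) ≠ 0 := Real.exp_ne_zero _
    rw [e1]
    have hx1 := hx₁ t ht
    have hx2 := hx₂ t ht
    field_simp
    ring_nf
    field_simp
    ring
  intro s hs t ht
  have hconv : Convex ℝ J := convex_iff_ordConnected.mpr hJ
  have := Convex.norm_image_sub_le_of_norm_hasDerivWithin_le (f := G) (f' := fun _ => 0) (C := 0)
    key (fun x _ => by simp) hconv ht hs
  simp only [zero_mul] at this
  have : G s = G t := by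
    have h := norm_sub_eq_zero_iff.mp (le_antisymm this (norm_nonneg _))
    exact h
  simpa [hG] using this
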